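/- Let K ⊆ ℂ be a subfield, m ≥ 5 an integer, and ζ a root of unity with ζ^m ∈ K and [K(ζ):K] = m−1. Let ω₁,ω₂,ω₃,ω₄ be roots of unity lying in K and k₁,k₂,k₃,k₄ ∈ {0,…,m−1} with gcd(kᵢ,m) = 1 for some i, k₁+k₂ ≡ k₃+k₄ (mod m), ω₃ζ^{k₃} ≠ 1, ω₄ζ^{k₄} ≠ 1, and suppose a := ((1−ω₁ζ^{k₁})(1−ω₂ζ^{k₂}))/((1−ω₃ζ^{k₃})(1−ω₄ζ^{k₄})) lies in K and is a nonzero real number different from 1 and −1. Then a ∈ {1/2, 2}. -/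

import Mathlib

open Polynomial

private lemma rpow1 (r : ℝ) (n : ℕ) (hn : n ≠ 0) (h0 : 0 ≤ r) (h : r ^ n = 1) : r = 1 := by
  rcases lt_trichotomy r 1 with h' | h' | h'
  · have := pow_lt_one₀ h0 h' hn
    rw [h] at this; exact absurd this (lt_irrefl 1)
  · exact h'
  · have := one_lt_pow₀ h' hn
    rw [h] at this; exact absurd this (lt_irrefl 1)

private lemma norm_one_of_pow (z : ℂ) (n : ℕ) (hn : n ≠ 0) (h : z ^ n = 1) : ‖z‖ = 1 := by
  refine rpow1 _ n hn (norm_nonneg z) ?_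
  rw [← norm_pow, h, norm_one]

private lemma R0norm (a : ℝ) (h : ‖1 - (a:ℂ)‖ = 1) : a = 0 ∨ a = 2 := by
  have h2 : |1 - a| = 1 := by
    rw [show (1:ℂ) - (a:ℂ) = ((1 - a : ℝ) : ℂ) by push_cast; ring] at h
    rwa [Complex.norm_real] at h
  rcases abs_eq (by norm_num : (0:ℝ) ≤ 1) |>.mp h2 with h3 | h3
  · left; linarith
  · right; linarith

private lemma R2norm (a : ℝ) (h : ‖1 - (a:ℂ)‖ = ‖(a:ℂ)‖) : a = 1/2 := by
  have h2 : |1 - a| = |a| := by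
    rw [show (1:ℂ) - (a:ℂ) = ((1 - a : ℝ) : ℂ) by push_cast; ring, Complex.norm_real,
      Complex.norm_real] at h
    exact h
  have h4 : (1 - a)^2 = a^2 := by rw [← sq_abs (1-a), ← sq_abs a, h2]
  nlinarith [h4]

private lemma R3norm (a : ℝ) (h : ‖(a:ℂ)‖ = 1) : a = 1 ∨ a = -1 := by
  rw [Complex.norm_real] at h
  rcases abs_eq (by norm_num : (0:ℝ) ≤ 1) |>.mp h with h3 | h3
  · left; exact h3
  · right; exact h3

private lemma R1 (a : ℝ) (ω ω' : ℂ) (hω : ‖ω‖ = 1) (hω' : ‖ω'‖ = 1)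
    (h : 1 - ω = (a:ℂ) * (1 - ω')) (ha : a ≠ 0) (ha1 : a ≠ 1) : ω' = 1 := by
  by_contra hne
  have hω0 : ω ≠ 0 := by intro h0; rw [h0, norm_zero] at hω; norm_num at hω
  have hω'0 : ω' ≠ 0 := by intro h0; rw [h0, norm_zero] at hω'; norm_num at hω'
  have hcω : (starRingEnd ℂ) ω = ω⁻¹ := by
    rw [← Complex.inv_eq_conj (by assumption)]
  have hcω' : (starRingEnd ℂ) ω' = ω'⁻¹ := by
    rw [← Complex.inv_eq_conj (by assumption)]
  have h2 := congrArg (starRingEnd ℂ) h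
  simp only [map_sub, map_mul, map_one, Complex.conj_ofReal, hcω, hcω'] at h2
  have h3 : ω' * (ω - 1) = (a:ℂ) * ω * (ω' - 1) := by
    have := congrArg (fun z => z * ω * ω') h2
    field_simp at this
    linear_combination this
  have h4 : (a:ℂ) * (ω' - 1) * (ω' - ω) = 0 := by
    linear_combination h3 + ω' * h
  have hω'1 : ω' - 1 ≠ 0 := sub_ne_zero.mpr hne
  have haC : (a:ℂ) ≠ 0 := by exact_mod_cast ha
  have h5 : ω' = ω := by
    rcases mul_eq_zero.mp h4 with h5 | h5
    · rcases mul_eq_zero.mp h5 with h6 | h6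
      · exact absurd h6 haC
      · exact absurd h6 hω'1
    · linear_combination h5
  rw [← h5] at h
  have h6 : ((a:ℂ) - 1) * (1 - ω') = 0 := by linear_combination -h
  rcases mul_eq_zero.mp h6 with h7 | h7
  · exact ha1 (by exact_mod_cast sub_eq_zero.mp h7)
  · exact hne (sub_eq_zero.mp h7).symm

private lemma card4 (a b c d : ℕ) : ({a,b,c,d} : Finset ℕ).card ≤ 4 := by
  have h1 := Finset.card_insert_le a ({b,c,d} : Finset ℕ)
  have h2 := Finset.card_insert_le b ({c,d} : Finset ℕ)
  have h3 := Finset.card_insert_le c ({d} : Finset ℕ)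
  have h4 : ({d} : Finset ℕ).card = 1 := Finset.card_singleton d
  omega

private lemma card5 (a b c d e : ℕ) : ({a,b,c,d,e} : Finset ℕ).card ≤ 5 := by
  have h1 := Finset.card_insert_le a ({b,c,d,e} : Finset ℕ)
  have h2 := card4 b c d e
  omega

private lemma card6 (a b c d e f : ℕ) : ({a,b,c,d,e,f} : Finset ℕ).card ≤ 6 := by
  have h1 := Finset.card_insert_le a ({b,c,d,e,f} : Finset ℕ)
  have h2 := card5 b c d e f
  omega

private lemma range_not_subset {m : ℕ} (T : Finset ℕ) (h : T.card < m) :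
    ¬ (Finset.range m ⊆ T) := by
  intro hs
  have := Finset.card_le_card hs
  rw [Finset.card_range] at this
  omega

set_option maxHeartbeats 1000000 in
private lemma caseA (m k1 k2 k3 k4 s : ℕ) (a : ℝ) (ω1 ω2 ω3 ω4 w : ℂ)
    (hm : 5 ≤ m) (hk10 : k1 ≠ 0) (hk1m : k1 < m) (hk2m : k2 < m) (hk3m : k3 < m)
    (hk4m : k4 < m) (hsm : s < m)
    (hS12 : s = k1 + k2 ∨ m + s = k1 + k2) (hS34 : s = k3 + k4 ∨ m + s = k3 + k4)
    (h2k1 : 2 * k1 ≠ m)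
    (hω1n : ‖ω1‖ = 1) (hω2n : ‖ω2‖ = 1) (hω3n : ‖ω3‖ = 1) (hω4n : ‖ω4‖ = 1)
    (hω1ne : ω1 ≠ 0) (hω2ne : ω2 ≠ 0)
    (hne3' : k3 = 0 → ω3 ≠ 1) (hne4' : k4 = 0 → ω4 ≠ 1)
    (ha0 : a ≠ 0) (ha1 : a ≠ 1) (ham1 : a ≠ -1)
    (hallC : ∀ j, j < m →
      (if j = 0 then 1 - (a:ℂ) else 0) + (if j = k1 then -ω1 else 0) +
      (if j = k2 then -ω2 else 0) + (if j = k3 then (a:ℂ) * ω3 else 0) +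
      (if j = k4 then (a:ℂ) * ω4 else 0) + (if j = s then w else 0) = 0) :
    a = 1 / 2 ∨ a = 2 := by
    by_cases hc20 : k2 = 0
    · -- case (i): k2 = 0, s = k1
      have hsk1 : s = k1 := by omega
      by_cases h30 : k3 = 0
      · have h4k : k4 = k1 := by omega
        have E0 := hallC 0 (by omega)
        rw [if_pos rfl, if_neg (by omega), if_pos (by omega), if_pos (by omega),
          if_neg (by omega), if_neg (by omega)] at E0
        have hR : 1 - ω2 = (a:ℂ) * (1 - ω3) := by linear_combination E0
        have h3one := R1 a ω2 ω3 hω2n hω3n hR ha0 ha1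
        exact absurd h3one (hne3' h30)
      · by_cases h40 : k4 = 0
        · have h3k : k3 = k1 := by omega
          have E0 := hallC 0 (by omega)
          rw [if_pos rfl, if_neg (by omega), if_pos (by omega), if_neg (by omega),
            if_pos (by omega), if_neg (by omega)] at E0
          have hR : 1 - ω2 = (a:ℂ) * (1 - ω4) := by linear_combination E0
          have h4one := R1 a ω2 ω4 hω2n hω4n hR ha0 ha1
          exact absurd h4one (hne4' h40)
        · have E0 := hallC 0 (by omega)
          rw [if_pos rfl, if_neg (by omega), if_pos (by omega), if_neg (by omega),
            if_neg (by omega), if_neg (by omega)] at E0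
          have hω2e : (1:ℂ) - a = ω2 := by linear_combination E0
          rcases R0norm a (by rw [hω2e, hω2n]) with h | h
          · exact absurd h ha0
          · right; exact h
    · by_cases hc21 : k2 = k1
      · -- case (ii): k2 = k1
        have hs0 : s ≠ 0 := by omega
        have hsk1' : s ≠ k1 := by omega
        by_cases h30 : k3 = 0
        · have h4s : k4 = s := by omega
          have E0 := hallC 0 (by omega)
          rw [if_pos rfl, if_neg (by omega), if_neg (by omega), if_pos (by omega),
            if_neg (by omega), if_neg (by omega)] at E0
          left
          refine R2norm a ?_
          rw [show (1:ℂ) - a = -((a:ℂ) * ω3) from by linear_combination E0, norm_neg,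
            norm_mul, hω3n, mul_one]
        · by_cases h40 : k4 = 0
          · have h3s : k3 = s := by omega
            have E0 := hallC 0 (by omega)
            rw [if_pos rfl, if_neg (by omega), if_neg (by omega), if_neg (by omega),
              if_pos (by omega), if_neg (by omega)] at E0
            left
            refine R2norm a ?_
            rw [show (1:ℂ) - a = -((a:ℂ) * ω4) from by linear_combination E0, norm_neg,
              norm_mul, hω4n, mul_one]
          · have E0 := hallC 0 (by omega)
            rw [if_pos rfl, if_neg (by omega), if_neg (by omega), if_neg (by omega),
              if_neg (by omega), if_neg (by omega)] at E0
            have : (a:ℂ) = 1 := by linear_combination -E0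
            exact absurd (by exact_mod_cast this) ha1
      · -- cases (iii)/(iv): k2 ∉ {0, k1}
        have hsnk1 : s ≠ k1 := by omega
        have hsnk2 : s ≠ k2 := by omega
        by_cases h31 : k3 = k1
        · by_cases h42 : k4 = k2
          · have E1 := hallC k1 (by omega)
            rw [if_neg (by omega), if_pos rfl, if_neg (by omega), if_pos (by omega),
              if_neg (by omega), if_neg (by omega)] at E1
            have hR : ω1 = (a:ℂ) * ω3 := by linear_combination -E1
            have : ‖(a:ℂ)‖ = 1 := by
              have h2 : ‖ω1‖ = ‖(a:ℂ) * ω3‖ := by rw [hR]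
              rw [hω1n, norm_mul, hω3n, mul_one] at h2
              exact h2.symm
            rcases R3norm a this with h | h
            · exact absurd h ha1
            · exact absurd h ham1
          · have E2 := hallC k2 (by omega)
            rw [if_neg (by omega), if_neg (by omega), if_pos rfl, if_neg (by omega),
              if_neg (by omega), if_neg (by omega)] at E2
            have : ω2 = 0 := by linear_combination -E2
            exact absurd this hω2ne
        · by_cases h41 : k4 = k1
          · by_cases h32 : k3 = k2
            · have E1 := hallC k1 (by omega)
              rw [if_neg (by omega), if_pos rfl, if_neg (by omega), if_neg (by omega),
                if_pos (by omega), if_neg (by omega)] at E1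
              have hR : ω1 = (a:ℂ) * ω4 := by linear_combination -E1
              have : ‖(a:ℂ)‖ = 1 := by
                have h2 : ‖ω1‖ = ‖(a:ℂ) * ω4‖ := by rw [hR]
                rw [hω1n, norm_mul, hω4n, mul_one] at h2
                exact h2.symm
              rcases R3norm a this with h | h
              · exact absurd h ha1
              · exact absurd h ham1
            · have E2 := hallC k2 (by omega)
              rw [if_neg (by omega), if_neg (by omega), if_pos rfl, if_neg (by omega),
                if_neg (by omega), if_neg (by omega)] at E2
              have : ω2 = 0 := by linear_combination -E2
              exact absurd this hω2ne
          · have E1 := hallC k1 (by omega)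
            rw [if_neg (by omega), if_pos rfl, if_neg (by omega), if_neg (by omega),
              if_neg (by omega), if_neg (by omega)] at E1
            have : ω1 = 0 := by linear_combination -E1
            exact absurd this hω1ne

set_option maxHeartbeats 1000000 in
private lemma caseB (m k1 k2 k3 k4 s : ℕ) (a : ℝ) (ω1 ω2 ω3 ω4 w : ℂ) (cc : ℕ → ℂ)
    (hm : 5 ≤ m) (hk10 : k1 ≠ 0) (hk1m : k1 < m) (hk2m : k2 < m) (hk3m : k3 < m)
    (hk4m : k4 < m) (hsm : s < m)
    (hω1n : ‖ω1‖ = 1) (hω2n : ‖ω2‖ = 1) (hω3n : ‖ω3‖ = 1) (hω4n : ‖ω4‖ = 1)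
    (ha0 : a ≠ 0) (ha1 : a ≠ 1) (ham1 : a ≠ -1)
    (hC : ∀ j : ℕ, cc j =
      (if j = 0 then 1 - (a:ℂ) else 0) + (if j = k1 then -ω1 else 0) +
      (if j = k2 then -ω2 else 0) + (if j = k3 then (a:ℂ) * ω3 else 0) +
      (if j = k4 then (a:ℂ) * ω4 else 0) + (if j = s then w else 0))
    (hnon : ∀ j, j < m → cc j ≠ 0)
    (hnorm : ∀ i j, i < m → j < m → ‖cc i‖ = ‖cc j‖) :
    a = 1 / 2 ∨ a = 2 := by
    have hmem : ∀ j, j < m → j ∈ ({0,k1,k2,k3,k4,s} : Finset ℕ) := by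
      intro j hj
      by_contra hnot
      simp only [Finset.mem_insert, Finset.mem_singleton] at hnot
      push_neg at hnot
      obtain ⟨u0, u1, u2, u3, u4, u5⟩ := hnot
      apply hnon j hj
      rw [hC j, if_neg u0, if_neg u1, if_neg u2, if_neg u3, if_neg u4, if_neg u5]
      ring
    have hsub : Finset.range m ⊆ ({0,k1,k2,k3,k4,s} : Finset ℕ) := by
      intro j hj; exact hmem j (Finset.mem_range.mp hj)
    have hm6 : m ≤ 6 := by
      have h1 := Finset.card_le_card hsub
      have h2 := card6 0 k1 k2 k3 k4 s
      rw [Finset.card_range] at h1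
      omega
    have hm56 : m = 5 ∨ m = 6 := by omega
    rcases hm56 with hm5 | hm6e
    · -- m = 5
      by_cases h12e : k1 = k2
      · -- collision k1 = k2 : a = 1/2
        have d30 : k3 ≠ 0 := by
          intro h
          refine range_not_subset (m := m) ({0,k1,k4,s} : Finset ℕ)
            (by have := card4 0 k1 k4 s; omega) ?_
          intro j hj
          have hmem' := hsub hj
          simp only [Finset.mem_insert, Finset.mem_singleton] at hmem' ⊢
          omega
        have d40 : k4 ≠ 0 := by
          intro h
          refine range_not_subset (m := m) ({0,k1,k3,s} : Finset ℕ)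
            (by have := card4 0 k1 k3 s; omega) ?_
          intro j hj
          have hmem' := hsub hj
          simp only [Finset.mem_insert, Finset.mem_singleton] at hmem' ⊢
          omega
        have ds0 : s ≠ 0 := by
          intro h
          refine range_not_subset (m := m) ({0,k1,k3,k4} : Finset ℕ)
            (by have := card4 0 k1 k3 k4; omega) ?_
          intro j hj
          have hmem' := hsub hj
          simp only [Finset.mem_insert, Finset.mem_singleton] at hmem' ⊢
          omega
        have d31 : k3 ≠ k1 := by
          intro h
          refine range_not_subset (m := m) ({0,k1,k4,s} : Finset ℕ)
            (by have := card4 0 k1 k4 s; omega) ?_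
          intro j hj
          have hmem' := hsub hj
          simp only [Finset.mem_insert, Finset.mem_singleton] at hmem' ⊢
          omega
        have d34 : k3 ≠ k4 := by
          intro h
          refine range_not_subset (m := m) ({0,k1,k3,s} : Finset ℕ)
            (by have := card4 0 k1 k3 s; omega) ?_
          intro j hj
          have hmem' := hsub hj
          simp only [Finset.mem_insert, Finset.mem_singleton] at hmem' ⊢
          omega
        have d3s : k3 ≠ s := by
          intro h
          refine range_not_subset (m := m) ({0,k1,k4,s} : Finset ℕ)
            (by have := card4 0 k1 k4 s; omega) ?_
          intro j hj
          have hmem' := hsub hj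
          simp only [Finset.mem_insert, Finset.mem_singleton] at hmem' ⊢
          omega
        have E0 : cc 0 = 1 - (a:ℂ) := by
          rw [hC 0, if_pos rfl, if_neg (by omega), if_neg (by omega), if_neg (by omega),
            if_neg (by omega), if_neg (by omega)]
          ring
        have E3 : cc k3 = (a:ℂ) * ω3 := by
          rw [hC k3, if_neg (by omega), if_neg (by omega), if_neg (by omega), if_pos rfl,
            if_neg (by omega), if_neg (by omega)]
          ring
        have hn := hnorm 0 k3 (by omega) (by omega)
        rw [E0, E3, norm_mul, hω3n, mul_one] at hn
        left
        exact R2norm a hn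
      · by_cases h34e : k3 = k4
        · -- collision k3 = k4 : a = 2
          have d20 : k2 ≠ 0 := by
            intro h
            refine range_not_subset (m := m) ({0,k1,k3,s} : Finset ℕ)
              (by have := card4 0 k1 k3 s; omega) ?_
            intro j hj
            have hmem' := hsub hj
            simp only [Finset.mem_insert, Finset.mem_singleton] at hmem' ⊢
            omega
          have d30 : k3 ≠ 0 := by
            intro h
            refine range_not_subset (m := m) ({0,k1,k2,s} : Finset ℕ)
              (by have := card4 0 k1 k2 s; omega) ?_
            intro j hj
            have hmem' := hsub hj
            simp only [Finset.mem_insert, Finset.mem_singleton] at hmem' ⊢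
            omega
          have ds0 : s ≠ 0 := by
            intro h
            refine range_not_subset (m := m) ({0,k1,k2,k3} : Finset ℕ)
              (by have := card4 0 k1 k2 k3; omega) ?_
            intro j hj
            have hmem' := hsub hj
            simp only [Finset.mem_insert, Finset.mem_singleton] at hmem' ⊢
            omega
          have d13 : k1 ≠ k3 := by
            intro h
            refine range_not_subset (m := m) ({0,k2,k3,s} : Finset ℕ)
              (by have := card4 0 k2 k3 s; omega) ?_
            intro j hj
            have hmem' := hsub hj
            simp only [Finset.mem_insert, Finset.mem_singleton] at hmem' ⊢
            omega
          have d1s : k1 ≠ s := by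
            intro h
            refine range_not_subset (m := m) ({0,k2,k3,s} : Finset ℕ)
              (by have := card4 0 k2 k3 s; omega) ?_
            intro j hj
            have hmem' := hsub hj
            simp only [Finset.mem_insert, Finset.mem_singleton] at hmem' ⊢
            omega
          have E0 : cc 0 = 1 - (a:ℂ) := by
            rw [hC 0, if_pos rfl, if_neg (by omega), if_neg (by omega), if_neg (by omega),
              if_neg (by omega), if_neg (by omega)]
            ring
          have E1 : cc k1 = -ω1 := by
            rw [hC k1, if_neg (by omega), if_pos rfl, if_neg (by omega), if_neg (by omega),
              if_neg (by omega), if_neg (by omega)]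
            ring
          have hn := hnorm 0 k1 (by omega) (by omega)
          rw [E0, E1, norm_neg, hω1n] at hn
          rcases R0norm a hn with h | h
          · exact absurd h ha0
          · right; exact h
        · -- no collision inside the pairs : contradiction
          have hI1 : (k1 ∉ ({k2,k3,k4,s} : Finset ℕ)) ∨ (k2 ∉ ({0,k3,k4,s} : Finset ℕ)) := by
            by_contra hcon
            push_neg at hcon
            obtain ⟨hA, hB⟩ := hcon
            simp only [Finset.mem_insert, Finset.mem_singleton] at hA hB
            refine range_not_subset (m := m) ({0,k3,k4,s} : Finset ℕ)
              (by have := card4 0 k3 k4 s; omega) ?_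
            intro j hj
            have hmem' := hsub hj
            simp only [Finset.mem_insert, Finset.mem_singleton] at hmem' ⊢
            omega
          have hI2 : (k3 ∉ ({0,k1,k2,s} : Finset ℕ)) ∨ (k4 ∉ ({0,k1,k2,s} : Finset ℕ)) := by
            by_contra hcon
            push_neg at hcon
            obtain ⟨hA, hB⟩ := hcon
            simp only [Finset.mem_insert, Finset.mem_singleton] at hA hB
            refine range_not_subset (m := m) ({0,k1,k2,s} : Finset ℕ)
              (by have := card4 0 k1 k2 s; omega) ?_
            intro j hj
            have hmem' := hsub hj
            simp only [Finset.mem_insert, Finset.mem_singleton] at hmem' ⊢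
            omega
          obtain ⟨P1, hP1m, w1, hw1, EP1⟩ :
              ∃ P, P < m ∧ ∃ w : ℂ, ‖w‖ = 1 ∧ cc P = -w := by
            rcases hI1 with h | h
            · simp only [Finset.mem_insert, Finset.mem_singleton] at h
              push_neg at h
              obtain ⟨e2', e3', e4', e5'⟩ := h
              refine ⟨k1, by omega, ω1, hω1n, ?_⟩
              rw [hC k1, if_neg (by omega), if_pos rfl, if_neg (by omega), if_neg (by omega),
                if_neg (by omega), if_neg (by omega)]
              ring
            · simp only [Finset.mem_insert, Finset.mem_singleton] at h
              push_neg at h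
              obtain ⟨f0', f3', f4', f5'⟩ := h
              refine ⟨k2, by omega, ω2, hω2n, ?_⟩
              rw [hC k2, if_neg (by omega), if_neg (by omega), if_pos rfl, if_neg (by omega),
                if_neg (by omega), if_neg (by omega)]
              ring
          obtain ⟨P2, hP2m, w2, hw2, EP2⟩ :
              ∃ P, P < m ∧ ∃ w : ℂ, ‖w‖ = 1 ∧ cc P = (a:ℂ) * w := by
            rcases hI2 with h | h
            · simp only [Finset.mem_insert, Finset.mem_singleton] at h
              push_neg at h
              obtain ⟨g0', g1', g2', g5'⟩ := h
              refine ⟨k3, by omega, ω3, hω3n, ?_⟩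
              rw [hC k3, if_neg (by omega), if_neg (by omega), if_neg (by omega), if_pos rfl,
                if_neg (by omega), if_neg (by omega)]
              ring
            · simp only [Finset.mem_insert, Finset.mem_singleton] at h
              push_neg at h
              obtain ⟨g0', g1', g2', g5'⟩ := h
              refine ⟨k4, by omega, ω4, hω4n, ?_⟩
              rw [hC k4, if_neg (by omega), if_neg (by omega), if_neg (by omega),
                if_neg (by omega), if_pos rfl, if_neg (by omega)]
              ring
          have hn := hnorm P1 P2 hP1m hP2m
          rw [EP1, EP2, norm_neg, hw1, norm_mul, hw2, mul_one] at hn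
          rcases R3norm a hn.symm with h | h
          · exact absurd h ha1
          · exact absurd h ham1
    · -- m = 6 : all six positions distinct, contradiction
      have hk2iso : k2 ∉ ({0,k1,k3,k4,s} : Finset ℕ) := by
        intro hmem2
        refine range_not_subset (m := m) ({0,k1,k3,k4,s} : Finset ℕ)
          (by have := card5 0 k1 k3 k4 s; omega) ?_
        intro j hj
        have hmem' := hsub hj
        simp only [Finset.mem_insert, Finset.mem_singleton] at hmem' hmem2 ⊢
        omega
      have hk3iso : k3 ∉ ({0,k1,k2,k4,s} : Finset ℕ) := by
        intro hmem2
        refine range_not_subset (m := m) ({0,k1,k2,k4,s} : Finset ℕ)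
          (by have := card5 0 k1 k2 k4 s; omega) ?_
        intro j hj
        have hmem' := hsub hj
        simp only [Finset.mem_insert, Finset.mem_singleton] at hmem' hmem2 ⊢
        omega
      simp only [Finset.mem_insert, Finset.mem_singleton] at hk2iso hk3iso
      push_neg at hk2iso hk3iso
      obtain ⟨u0, u1, u3, u4, u5⟩ := hk2iso
      obtain ⟨v0, v1, v2, v4, v5⟩ := hk3iso
      have E2 : cc k2 = -ω2 := by
        rw [hC k2, if_neg (by omega), if_neg (by omega), if_pos rfl, if_neg (by omega),
          if_neg (by omega), if_neg (by omega)]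
        ring
      have E3 : cc k3 = (a:ℂ) * ω3 := by
        rw [hC k3, if_neg (by omega), if_neg (by omega), if_neg (by omega), if_pos rfl,
          if_neg (by omega), if_neg (by omega)]
        ring
      have hn := hnorm k2 k3 (by omega) (by omega)
      rw [E2, E3, norm_neg, hω2n, norm_mul, hω3n, mul_one] at hn
      rcases R3norm a hn.symm with h | h
      · exact absurd h ha1
      · exact absurd h ham1

set_option maxHeartbeats 2000000 in
private lemma core (K : IntermediateField ℚ ℂ) (m : ℕ) (hm : 5 ≤ m)
    (ζ : ℂ) (hζ : ∃ n : ℕ, 0 < n ∧ ζ ^ n = 1) (hζm : ζ ^ m ∈ K)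
    (hdeg : Module.finrank K (IntermediateField.adjoin K {ζ}) = m - 1)
    (ω1 ω2 ω3 ω4 : ℂ)
    (hω1 : ω1 ∈ K ∧ ∃ n : ℕ, 0 < n ∧ ω1 ^ n = 1)
    (hω2 : ω2 ∈ K ∧ ∃ n : ℕ, 0 < n ∧ ω2 ^ n = 1)
    (hω3 : ω3 ∈ K ∧ ∃ n : ℕ, 0 < n ∧ ω3 ^ n = 1)
    (hω4 : ω4 ∈ K ∧ ∃ n : ℕ, 0 < n ∧ ω4 ^ n = 1)
    (k1 k2 k3 k4 : ℕ) (hk1 : k1 ≤ m - 1) (hk2 : k2 ≤ m - 1) (hk3 : k3 ≤ m - 1)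
    (hk4 : k4 ≤ m - 1)
    (hgcd : Nat.gcd k1 m = 1)
    (hmod : (k1 + k2) % m = (k3 + k4) % m)
    (hne3 : ω3 * ζ ^ k3 ≠ 1) (hne4 : ω4 * ζ ^ k4 ≠ 1)
    (a : ℝ) (ha0 : a ≠ 0) (ha1 : a ≠ 1) (ham1 : a ≠ -1) (haK : (a : ℂ) ∈ K)
    (haeq : (a : ℂ) = ((1 - ω1 * ζ ^ k1) * (1 - ω2 * ζ ^ k2))
        / ((1 - ω3 * ζ ^ k3) * (1 - ω4 * ζ ^ k4))) :
    a = 1 / 2 ∨ a = 2 := by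
  have hm0 : m ≠ 0 := by omega
  -- basic facts
  obtain ⟨nζ, hnζ, hζpow⟩ := hζ
  have hζnorm : ‖ζ‖ = 1 := norm_one_of_pow ζ nζ hnζ.ne' hζpow
  have hζ0 : ζ ≠ 0 := by intro h; rw [h, norm_zero] at hζnorm; norm_num at hζnorm
  obtain ⟨n1, hn1, h1p⟩ := hω1.2
  obtain ⟨n2, hn2, h2p⟩ := hω2.2
  obtain ⟨n3, hn3, h3p⟩ := hω3.2
  obtain ⟨n4, hn4, h4p⟩ := hω4.2
  have hω1n : ‖ω1‖ = 1 := norm_one_of_pow ω1 n1 hn1.ne' h1p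
  have hω2n : ‖ω2‖ = 1 := norm_one_of_pow ω2 n2 hn2.ne' h2p
  have hω3n : ‖ω3‖ = 1 := norm_one_of_pow ω3 n3 hn3.ne' h3p
  have hω4n : ‖ω4‖ = 1 := norm_one_of_pow ω4 n4 hn4.ne' h4p
  have hω1ne : ω1 ≠ 0 := by intro h; rw [h, norm_zero] at hω1n; norm_num at hω1n
  have hω2ne : ω2 ≠ 0 := by intro h; rw [h, norm_zero] at hω2n; norm_num at hω2n
  have haC : (a:ℂ) ≠ 0 := by exact_mod_cast ha0
  have haC1 : (a:ℂ) ≠ 1 := by exact_mod_cast ha1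
  -- k1 facts
  have hk10 : k1 ≠ 0 := by
    intro h; rw [h] at hgcd; simp [Nat.gcd_comm] at hgcd; omega
  have hk1m : k1 < m := by omega
  have hk2m : k2 < m := by omega
  have hk3m : k3 < m := by omega
  have hk4m : k4 < m := by omega
  have hndvd2 : ¬ (m ∣ 2 * k1) := by
    intro hdvd
    have hco : Nat.Coprime m k1 := (Nat.coprime_comm.mp hgcd)
    have h2 := (Nat.Coprime.dvd_of_dvd_mul_right hco hdvd)
    have := Nat.le_of_dvd (by norm_num) h2
    omega
  -- equation
  have hd3 : 1 - ω3 * ζ ^ k3 ≠ 0 := sub_ne_zero.mpr (fun h => hne3 h.symm)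
  have hd4 : 1 - ω4 * ζ ^ k4 ≠ 0 := sub_ne_zero.mpr (fun h => hne4 h.symm)
  rw [eq_div_iff (mul_ne_zero hd3 hd4)] at haeq
  -- haeq : ↑a * ((1 - ω3 * ζ^k3) * (1 - ω4 * ζ^k4)) = (1 - ω1*ζ^k1) * (1 - ω2*ζ^k2)
  have hn12 : (1 - ω1 * ζ ^ k1) * (1 - ω2 * ζ ^ k2) ≠ 0 := by
    rw [← haeq]
    exact mul_ne_zero haC (mul_ne_zero hd3 hd4)
  have hne1 : ω1 * ζ ^ k1 ≠ 1 := by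
    intro h
    apply hn12
    rw [h]; ring
  have hne2 : ω2 * ζ ^ k2 ≠ 1 := by
    intro h
    apply hn12
    rw [h]; ring
  -- positions
  set s := (k1 + k2) % m with hsdef
  have hsm : s < m := Nat.mod_lt _ (by omega)
  obtain ⟨e1, hE1, he1le⟩ : ∃ e, m * e + s = k1 + k2 ∧ e ≤ 1 := by
    refine ⟨(k1 + k2) / m, ?_, ?_⟩
    · rw [hsdef]; exact Nat.div_add_mod _ _
    · have h2 : (k1 + k2) / m < 2 := by
        rw [Nat.div_lt_iff_lt_mul (show 0 < m by omega)]
        omega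
      omega
  obtain ⟨e2, hE2, he2le⟩ : ∃ e, m * e + s = k3 + k4 ∧ e ≤ 1 := by
    refine ⟨(k3 + k4) / m, ?_, ?_⟩
    · rw [hmod]; exact Nat.div_add_mod _ _
    · have h2 : (k3 + k4) / m < 2 := by
        rw [Nat.div_lt_iff_lt_mul (show 0 < m by omega)]
        omega
      omega
  have h12 : ζ ^ k1 * ζ ^ k2 = (ζ ^ m) ^ e1 * ζ ^ s := by
    rw [← pow_mul, ← pow_add, ← pow_add]
    congr 1
    omega
  have h34 : ζ ^ k3 * ζ ^ k4 = (ζ ^ m) ^ e2 * ζ ^ s := by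
    rw [← pow_mul, ← pow_add, ← pow_add]
    congr 1
    omega
  have hS12 : s = k1 + k2 ∨ m + s = k1 + k2 := by
    rcases Nat.le_one_iff_eq_zero_or_eq_one.mp he1le with h | h <;> rw [h] at hE1 <;> omega
  have hS34 : s = k3 + k4 ∨ m + s = k3 + k4 := by
    rcases Nat.le_one_iff_eq_zero_or_eq_one.mp he2le with h | h <;> rw [h] at hE2 <;> omega
  have h2k1 : 2 * k1 ≠ m := fun h => hndvd2 ⟨1, by omega⟩
  -- K-side elements
  set α : K := ⟨(a:ℂ), haK⟩ with hα
  set O1 : K := ⟨ω1, hω1.1⟩ with hO1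
  set O2 : K := ⟨ω2, hω2.1⟩ with hO2
  set O3 : K := ⟨ω3, hω3.1⟩ with hO3
  set O4 : K := ⟨ω4, hω4.1⟩ with hO4
  set β : K := ⟨ζ ^ m, hζm⟩ with hβ
  set c : ℕ → K := fun j =>
    (if j = 0 then 1 - α else 0) + (if j = k1 then -O1 else 0) +
    (if j = k2 then -O2 else 0) + (if j = k3 then α * O3 else 0) +
    (if j = k4 then α * O4 else 0) +
    (if j = s then O1 * O2 * β ^ e1 - α * O3 * O4 * β ^ e2 else 0) with hc
  have hC : ∀ j : ℕ, (algebraMap K ℂ) (c j) =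
      (if j = 0 then 1 - (a:ℂ) else 0) + (if j = k1 then -ω1 else 0) +
      (if j = k2 then -ω2 else 0) + (if j = k3 then (a:ℂ) * ω3 else 0) +
      (if j = k4 then (a:ℂ) * ω4 else 0) +
      (if j = s then ω1 * ω2 * (ζ^m) ^ e1 - (a:ℂ) * ω3 * ω4 * (ζ^m) ^ e2 else 0) := by
    intro j
    simp only [hc, map_add, apply_ite (algebraMap K ℂ), map_sub, map_mul, map_one, map_neg,
      map_pow, map_zero]
    rfl
  have hsum : ∑ j ∈ Finset.range m, (algebraMap K ℂ (c j)) * ζ ^ j = 0 := by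
    simp only [hC, add_mul, Finset.sum_add_distrib, ite_mul, zero_mul]
    rw [Finset.sum_ite_eq' (Finset.range m) 0, Finset.sum_ite_eq' (Finset.range m) k1,
      Finset.sum_ite_eq' (Finset.range m) k2, Finset.sum_ite_eq' (Finset.range m) k3,
      Finset.sum_ite_eq' (Finset.range m) k4, Finset.sum_ite_eq' (Finset.range m) s]
    simp only [Finset.mem_range, if_pos (by omega : (0:ℕ) < m), if_pos hk1m, if_pos hk2m,
      if_pos hk3m, if_pos hk4m, if_pos hsm]
    linear_combination -haeq - ω1 * ω2 * h12 + (a:ℂ) * ω3 * ω4 * h34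
  -- linear algebra: obtain η and the recurrence
  obtain ⟨η, hetaC, hetane, hrec⟩ :
      ∃ η : K, (η:ℂ) ^ m = ζ ^ m ∧ η ≠ 0 ∧ (∀ j, j + 1 < m → c j = η * c (j+1)) := by
    set p : Polynomial K := X ^ m - C β with hp
    have hpm : p.Monic := monic_X_pow_sub_C β hm0
    have halg : algebraMap K ℂ β = ζ ^ m := rfl
    have haevalp : Polynomial.aeval ζ p = 0 := by
      simp [hp, halg]
    have hint : IsIntegral K ζ := ⟨p, hpm, by rw [← Polynomial.aeval_def]; exact haevalp⟩
    have hfdeg : (minpoly K ζ).natDegree = m - 1 := by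
      rw [← IntermediateField.adjoin.finrank hint]; exact hdeg
    set f := minpoly K ζ with hf
    have hfm : f.Monic := minpoly.monic hint
    have hdvd : f ∣ p := minpoly.dvd K ζ haevalp
    obtain ⟨g, hg⟩ := hdvd
    have hf0 : f ≠ 0 := hfm.ne_zero
    have hg0 : g ≠ 0 := by
      intro h; rw [h, mul_zero] at hg; exact (hpm.ne_zero) hg
    have hpdeg : p.natDegree = m := by
      rw [hp]; exact natDegree_X_pow_sub_C
    have hgm : g.Monic := by
      have := hpm
      rw [hg] at this
      exact hfm.of_mul_monic_left this
    have hgdeg : g.natDegree = 1 := by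
      have := natDegree_mul hf0 hg0
      rw [← hg, hpdeg, hfdeg] at this
      omega
    have hgX : g = X + C (g.coeff 0) := hgm.eq_X_add_C hgdeg
    set g0 : K := g.coeff 0 with hg0def
    have hevalg : g.eval (-g0) = 0 := by
      rw [hgX]; simp
    have hetaK : (-g0) ^ m = β := by
      have h1 : p.eval (-g0) = 0 := by
        rw [hg, eval_mul, hevalg, mul_zero]
      rw [hp] at h1
      simp at h1
      linear_combination h1
    have hetaC : ((-g0 : K) : ℂ) ^ m = ζ ^ m := by
      have := congrArg (algebraMap K ℂ) hetaK
      rw [map_pow] at this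
      exact this
    have hetane : (-g0 : K) ≠ 0 := by
      intro h
      rw [h] at hetaC
      simp [zero_pow hm0] at hetaC
      exact hζ0 (pow_eq_zero_iff hm0 |>.mp hetaC.symm)
    refine ⟨-g0, hetaC, hetane, ?_⟩
    set R : Polynomial K := ∑ j ∈ Finset.range m, monomial j (c j) with hR
    have hRcoeff : ∀ t, R.coeff t = if t < m then c t else 0 := by
      intro t
      rw [hR, finset_sum_coeff]
      simp only [coeff_monomial]
      rw [Finset.sum_ite_eq' (Finset.range m) t c]
      simp [Finset.mem_range]
    have haevalR : Polynomial.aeval ζ R = 0 := by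
      rw [hR, map_sum]
      simpa [Polynomial.aeval_monomial] using hsum
    have hdvdR : f ∣ R := minpoly.dvd K ζ haevalR
    obtain ⟨d, hd⟩ := hdvdR
    by_cases hd0 : d = 0
    · have hR0 : R = 0 := by rw [hd, hd0, mul_zero]
      intro j hj
      have h1 := hRcoeff j
      have h2 := hRcoeff (j+1)
      rw [hR0, coeff_zero] at h1 h2
      rw [if_pos (by omega)] at h1
      rw [if_pos (by omega)] at h2
      rw [← h1, ← h2, mul_zero]
    · have hRdegle : R.natDegree ≤ m - 1 := by
        rw [natDegree_le_iff_coeff_eq_zero]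
        intro N hN
        rw [hRcoeff N, if_neg (by omega)]
      have hR0 : R ≠ 0 := by
        rw [hd]; exact mul_ne_zero hf0 hd0
      have hddeg : d.natDegree = 0 := by
        have := natDegree_mul hf0 hd0
        rw [← hd, hfdeg] at this
        omega
      obtain ⟨lam, hlam⟩ : ∃ lam, d = C lam := ⟨d.coeff 0, eq_C_of_natDegree_eq_zero hddeg⟩
      have hRg : R * g = p * C lam := by
        rw [hd, hlam, hg]; ring
      intro j hj
      have h1 := congrArg (fun q => q.coeff (j+1)) hRg
      try simp only at h1
      rw [hgX] at h1
      rw [mul_add, coeff_add, coeff_mul_X, coeff_mul_C, coeff_mul_C, hp] at h1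
      rw [coeff_sub, coeff_X_pow, coeff_C, if_neg (by omega), if_neg (by omega)] at h1
      rw [hRcoeff j, hRcoeff (j+1), if_pos (by omega), if_pos (by omega)] at h1
      simp at h1
      linear_combination h1
  have hηn : ‖(η:ℂ)‖ = 1 := by
    refine rpow1 _ m hm0 (norm_nonneg _) ?_
    rw [← norm_pow, hetaC, norm_pow, hζnorm, one_pow]
  have key : ∀ n j, j + n < m → c j = η ^ n * c (j + n) := by
    intro n
    induction n with
    | zero => intro j _; simp
    | succ n ih =>
      intro j hj
      have h1 := hrec j (by omega)
      rw [h1, ih (j+1) (by omega), show j + 1 + n = j + (n+1) from by omega]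
      ring
  have hcases : (∀ j, j < m → c j = 0) ∨ (∀ j, j < m → c j ≠ 0) := by
    by_cases hex : ∃ j0, j0 < m ∧ c j0 = 0
    · obtain ⟨j0, hj0, hcj0⟩ := hex
      left
      intro j hj
      rcases le_total j j0 with h | h
      · have := key (j0 - j) j (by omega)
        rw [show j + (j0 - j) = j0 from by omega, hcj0, mul_zero] at this
        exact this
      · have h1 := key (j - j0) j0 (by omega)
        rw [show j0 + (j - j0) = j from by omega, hcj0] at h1
        rcases mul_eq_zero.mp h1.symm with h3 | h3
        · exact absurd h3 (pow_ne_zero _ hetane)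
        · exact h3
    · right; push_neg at hex; intro j hj; exact hex j hj
  rcases hcases with hall | hnon
  · refine caseA m k1 k2 k3 k4 s a ω1 ω2 ω3 ω4
      (ω1 * ω2 * (ζ^m) ^ e1 - (a:ℂ) * ω3 * ω4 * (ζ^m) ^ e2) hm hk10 hk1m hk2m hk3m hk4m hsm
      hS12 hS34 h2k1 hω1n hω2n hω3n hω4n hω1ne hω2ne ?_ ?_ ha0 ha1 ham1 ?_
    · intro h30 h31
      apply hne3
      rw [h30, pow_zero, mul_one, h31]
    · intro h40 h41
      apply hne4
      rw [h40, pow_zero, mul_one, h41]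
    · intro j hj
      rw [← hC j, hall j hj, map_zero]
  · refine caseB m k1 k2 k3 k4 s a ω1 ω2 ω3 ω4
      (ω1 * ω2 * (ζ^m) ^ e1 - (a:ℂ) * ω3 * ω4 * (ζ^m) ^ e2)
      (fun j => (algebraMap K ℂ) (c j)) hm hk10 hk1m hk2m hk3m hk4m hsm
      hω1n hω2n hω3n hω4n ha0 ha1 ham1 hC ?_ ?_
    · intro j hj h0
      exact hnon j hj ((map_eq_zero_iff _ (algebraMap K ℂ).injective).mp h0)
    · intro i j hi hj
      rcases le_total i j with h | h
      · have h1 := key (j - i) i (by omega)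
        rw [show i + (j - i) = j from by omega] at h1
        show ‖(algebraMap K ℂ) (c i)‖ = ‖(algebraMap K ℂ) (c j)‖
        rw [h1, map_mul, norm_mul, map_pow, norm_pow]
        have h2 : ‖(algebraMap K ℂ) η‖ = 1 := hηn
        rw [h2, one_pow, one_mul]
      · have h1 := key (i - j) j (by omega)
        rw [show j + (i - j) = i from by omega] at h1
        show ‖(algebraMap K ℂ) (c i)‖ = ‖(algebraMap K ℂ) (c j)‖
        rw [h1, map_mul, norm_mul, map_pow, norm_pow]
        have h2 : ‖(algebraMap K ℂ) η‖ = 1 := hηn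
        rw [h2, one_pow, one_mul]

/-- Lemma on quotients of products (1−ωζ^k), case (b): [K(ζ):K] = m−1 with m ≥ 5. -/
theorem ratio_in_half_two_degree_sub_one (K : IntermediateField ℚ ℂ) (m : ℕ) (hm : 5 ≤ m)
    (ζ : ℂ) (hζ : ∃ n : ℕ, 0 < n ∧ ζ ^ n = 1) (hζm : ζ ^ m ∈ K)
    (hdeg : Module.finrank K (IntermediateField.adjoin K {ζ}) = m - 1)
    (ω1 ω2 ω3 ω4 : ℂ)
    (hω1 : ω1 ∈ K ∧ ∃ n : ℕ, 0 < n ∧ ω1 ^ n = 1)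
    (hω2 : ω2 ∈ K ∧ ∃ n : ℕ, 0 < n ∧ ω2 ^ n = 1)
    (hω3 : ω3 ∈ K ∧ ∃ n : ℕ, 0 < n ∧ ω3 ^ n = 1)
    (hω4 : ω4 ∈ K ∧ ∃ n : ℕ, 0 < n ∧ ω4 ^ n = 1)
    (k1 k2 k3 k4 : ℕ) (hk1 : k1 ≤ m - 1) (hk2 : k2 ≤ m - 1) (hk3 : k3 ≤ m - 1)
    (hk4 : k4 ≤ m - 1)
    (hgcd : Nat.gcd k1 m = 1 ∨ Nat.gcd k2 m = 1 ∨ Nat.gcd k3 m = 1 ∨ Nat.gcd k4 m = 1)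
    (hmod : (k1 + k2) % m = (k3 + k4) % m)
    (hne3 : ω3 * ζ ^ k3 ≠ 1) (hne4 : ω4 * ζ ^ k4 ≠ 1)
    (a : ℝ) (ha0 : a ≠ 0) (ha1 : a ≠ 1) (ham1 : a ≠ -1) (haK : (a : ℂ) ∈ K)
    (haeq : (a : ℂ) = ((1 - ω1 * ζ ^ k1) * (1 - ω2 * ζ ^ k2))
        / ((1 - ω3 * ζ ^ k3) * (1 - ω4 * ζ ^ k4))) :
    a = 1 / 2 ∨ a = 2 := by
  have hd3 : 1 - ω3 * ζ ^ k3 ≠ 0 := sub_ne_zero.mpr (fun hx => hne3 hx.symm)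
  have hd4 : 1 - ω4 * ζ ^ k4 ≠ 0 := sub_ne_zero.mpr (fun hx => hne4 hx.symm)
  have haC : (a:ℂ) ≠ 0 := by exact_mod_cast ha0
  have heq2 : (a:ℂ) * ((1 - ω3 * ζ ^ k3) * (1 - ω4 * ζ ^ k4))
      = (1 - ω1 * ζ ^ k1) * (1 - ω2 * ζ ^ k2) := by
    rw [haeq]
    field_simp
  have hn12 : (1 - ω1 * ζ ^ k1) * (1 - ω2 * ζ ^ k2) ≠ 0 := by
    rw [← heq2]
    exact mul_ne_zero haC (mul_ne_zero hd3 hd4)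
  have hne1 : ω1 * ζ ^ k1 ≠ 1 := fun hx => hn12 (by rw [hx]; ring)
  have hne2 : ω2 * ζ ^ k2 ≠ 1 := fun hx => hn12 (by rw [hx]; ring)
  have ha0' : a⁻¹ ≠ 0 := inv_ne_zero ha0
  have ha1' : a⁻¹ ≠ 1 := fun hx => ha1 (inv_eq_one.mp hx)
  have ham1' : a⁻¹ ≠ -1 := by
    intro hx
    apply ham1
    rw [show (-1:ℝ) = (-1)⁻¹ from by norm_num] at hx
    exact inv_injective hx
  have haK' : ((a⁻¹ : ℝ) : ℂ) ∈ K := by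
    rw [Complex.ofReal_inv]
    exact inv_mem haK
  have haeqinv : ((a⁻¹ : ℝ) : ℂ) = ((1 - ω3 * ζ ^ k3) * (1 - ω4 * ζ ^ k4))
      / ((1 - ω1 * ζ ^ k1) * (1 - ω2 * ζ ^ k2)) := by
    rw [Complex.ofReal_inv, eq_div_iff hn12, ← heq2, ← mul_assoc, inv_mul_cancel₀ haC,
      one_mul]
  rcases hgcd with h | h | h | h
  · exact core K m hm ζ hζ hζm hdeg ω1 ω2 ω3 ω4 hω1 hω2 hω3 hω4 k1 k2 k3 k4 hk1 hk2 hk3 hk4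
      h hmod hne3 hne4 a ha0 ha1 ham1 haK haeq
  · refine core K m hm ζ hζ hζm hdeg ω2 ω1 ω3 ω4 hω2 hω1 hω3 hω4 k2 k1 k3 k4 hk2 hk1 hk3 hk4
      h ?_ hne3 hne4 a ha0 ha1 ham1 haK ?_
    · rw [Nat.add_comm k2 k1]; exact hmod
    · rw [haeq]; ring
  · have := core K m hm ζ hζ hζm hdeg ω3 ω4 ω1 ω2 hω3 hω4 hω1 hω2 k3 k4 k1 k2 hk3 hk4 hk1 hk2
      h hmod.symm hne1 hne2 (a⁻¹) ha0' ha1' ham1' haK' haeqinv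
    rcases this with h' | h'
    · right
      rw [show (2:ℝ) = (1/2)⁻¹ from by norm_num, ← h', inv_inv]
    · left
      rw [show (1:ℝ)/2 = 2⁻¹ from by norm_num, ← h', inv_inv]
  · have hmod' : (k4 + k3) % m = (k1 + k2) % m := by rw [Nat.add_comm k4 k3]; exact hmod.symm
    have haeqinv' : ((a⁻¹ : ℝ) : ℂ) = ((1 - ω4 * ζ ^ k4) * (1 - ω3 * ζ ^ k3))
        / ((1 - ω1 * ζ ^ k1) * (1 - ω2 * ζ ^ k2)) := by
      rw [haeqinv]; ring
    have := core K m hm ζ hζ hζm hdeg ω4 ω3 ω1 ω2 hω4 hω3 hω1 hω2 k4 k3 k1 k2 hk4 hk3 hk1 hk2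
      h hmod' hne1 hne2 (a⁻¹) ha0' ha1' ham1' haK' haeqinv'
    rcases this with h' | h'
    · right
      rw [show (2:ℝ) = (1/2)⁻¹ from by norm_num, ← h', inv_inv]
    · left
      rw [show (1:ℝ)/2 = 2⁻¹ from by norm_num, ← h', inv_inv]
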